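/- Let $(C,D)$ be a regular inclusion, let $(C_1, D_1)$ be a regular MASA inclusion, and let $\alpha : C \to C_1$ be a unital injective $*$-homomorphism which is regular, i.e., $\alpha(N(C,D)) \subseteq N(C_1,D_1)$. Then the relative commutant $D^c = \{x \in C : xd = dx \text{ for all } d \in D\}$ of $D$ in $C$ is commutative. -/

import Mathlib

/-- `v` is a normalizer of the subset `S`:  `v* S v ⊆ S` and `v S v* ⊆ S`. -/
def IsNormalizer {C : Type*} [Mul C] [Star C] (S : Set C) (v : C) : Prop :=
  ∀ d ∈ S, star v * d * v ∈ S ∧ v * d * star v ∈ S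


open NormedSpace

noncomputable instance cstarNormedAlgebraRat {A : Type*} [CStarAlgebra A] : NormedAlgebra ℚ A :=
  NormedAlgebra.restrictScalars ℚ ℂ A

private lemma expNegMulExp {A : Type*} [CStarAlgebra A] (y : A) : exp (-y) * exp y = 1 := by
  rw [← exp_add_of_commute (Commute.refl y).neg_left, neg_add_cancel, exp_zero]

private lemma commute_of_commutator_commutes {A : Type*} [CStarAlgebra A]
    {a b : A} (ha : IsSelfAdjoint a)
    (hc : Commute a (b * a - a * b)) : b * a = a * b := by
  nontriviality A
  by_contra hne
  set c := b * a - a * b with hcdef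
  have hcne : c ≠ 0 := sub_ne_zero.mpr hne
  set x : A := Complex.I • a with hxdef
  have hxc : Commute x c := hc.smul_left Complex.I
  have hbx : b * x - x * b = Complex.I • c := by
    rw [hxdef, mul_smul_comm, smul_mul_assoc, ← smul_sub]
  have hstarx : star x = -x := by
    rw [hxdef, star_smul, ha.star_eq, Complex.star_def, Complex.conj_I, neg_smul]
  -- the derivative computation
  have hK : ∀ t : ℂ, HasDerivAt
      (fun t : ℂ => exp (t • (-x)) * b * exp (t • x)) (Complex.I • c) t := by
    intro t
    have h1 : HasDerivAt (fun t : ℂ => exp (t • (-x))) (exp (t • (-x)) * (-x)) t :=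
      hasDerivAt_exp_smul_const (-x) t
    have h2 : HasDerivAt (fun t : ℂ => exp (t • x)) (exp (t • x) * x) t :=
      hasDerivAt_exp_smul_const x t
    have h3 := (h1.mul_const b).mul h2
    have hx2 : Commute x (exp (t • x)) := ((Commute.refl x).smul_right t).exp_right
    have hcE : Commute (Complex.I • c) (exp (t • (-x))) :=
      ((hxc.symm.neg_right.smul_right t).exp_right).smul_left Complex.I
    have hinv : exp (t • (-x)) * exp (t • x) = 1 := by
      rw [smul_neg]; exact expNegMulExp (t • x)
    have key : exp (t • (-x)) * (-x) * b * exp (t • x) +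
        exp (t • (-x)) * b * (exp (t • x) * x) = Complex.I • c := by
      rw [← hx2.eq]
      have step1 : exp (t • (-x)) * (-x) * b * exp (t • x) +
          exp (t • (-x)) * b * (x * exp (t • x)) =
          exp (t • (-x)) * ((b * x - x * b) * exp (t • x)) := by noncomm_ring
      rw [step1, hbx, ← mul_assoc, ← hcE.eq, mul_assoc, hinv, mul_one]
    exact key ▸ h3
  -- constancy of the derivative-adjusted function
  have hL : ∀ t : ℂ, HasDerivAt
      (fun t : ℂ => exp (t • (-x)) * b * exp (t • x) - t • (Complex.I • c)) 0 t := by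
    intro t
    have := (hK t).sub ((hasDerivAt_id t).smul_const (Complex.I • c))
    simpa [Pi.sub_def] using this
  have hconst : ∀ t : ℂ, exp (t • (-x)) * b * exp (t • x) - t • (Complex.I • c) = b := by
    intro t
    have h0 : (fun t : ℂ => exp (t • (-x)) * b * exp (t • x) - t • (Complex.I • c)) t =
        (fun t : ℂ => exp (t • (-x)) * b * exp (t • x) - t • (Complex.I • c)) 0 := by
      refine is_const_of_fderiv_eq_zero (𝕜 := ℂ)
        (fun u => (hL u).differentiableAt) (fun u => ?_) t 0
      rw [(hL u).hasFDerivAt.fderiv]; ext; simp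
    simpa [exp_zero] using h0
  -- bound for real parameters
  have hbound : ∀ r : ℝ, ‖b + (r : ℂ) • (Complex.I • c)‖ ≤ ‖b‖ := by
    intro r
    have hskew : ((r : ℂ) • x) ∈ skewAdjoint A := by
      rw [skewAdjoint.mem_iff, star_smul, hstarx, Complex.star_def, Complex.conj_ofReal,
        smul_neg]
    have hu : exp ((r : ℂ) • x) ∈ unitary A := exp_mem_unitary_of_mem_skewAdjoint hskew
    have hstaru : star (exp ((r : ℂ) • x)) = exp ((r : ℂ) • (-x)) := by
      rw [star_exp, star_smul, hstarx, Complex.star_def, Complex.conj_ofReal]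
    have hKr : b + (r : ℂ) • (Complex.I • c) =
        star (exp ((r : ℂ) • x)) * b * exp ((r : ℂ) • x) := by
      rw [hstaru]
      rw [add_comm]; exact (sub_eq_iff_eq_add'.mp (hconst ((r : ℂ)))).symm
    rw [hKr]
    calc ‖star (exp ((r : ℂ) • x)) * b * exp ((r : ℂ) • x)‖
        ≤ ‖star (exp ((r : ℂ) • x)) * b‖ * ‖exp ((r : ℂ) • x)‖ := norm_mul_le _ _
      _ ≤ ‖star (exp ((r : ℂ) • x))‖ * ‖b‖ * ‖exp ((r : ℂ) • x)‖ := by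
          gcongr; exact norm_mul_le _ _
      _ = ‖b‖ := by
          rw [norm_star, CStarRing.norm_of_mem_unitary hu]; ring
  -- contradiction
  have hcpos : 0 < ‖c‖ := norm_pos_iff.mpr hcne
  set r : ℝ := (2 * ‖b‖ + 1) / ‖c‖ with hrdef
  have hrnonneg : 0 ≤ r := by positivity
  have h1 := hbound r
  have h2 : ‖(r : ℂ) • (Complex.I • c)‖ = r * ‖c‖ := by
    rw [norm_smul, norm_smul, Complex.norm_real, Complex.norm_I, Real.norm_eq_abs,
      abs_of_nonneg hrnonneg, one_mul]
  have h3 : ‖(r : ℂ) • (Complex.I • c)‖ ≤ 2 * ‖b‖ := by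
    calc ‖(r : ℂ) • (Complex.I • c)‖
        = ‖(b + (r : ℂ) • (Complex.I • c)) + (-b)‖ := by congr 1; abel
      _ ≤ ‖b + (r : ℂ) • (Complex.I • c)‖ + ‖(-b : A)‖ := norm_add_le _ _
      _ ≤ ‖b‖ + ‖b‖ := by rw [norm_neg]; exact add_le_add_left h1 _
      _ = 2 * ‖b‖ := by ring
  rw [h2, hrdef, div_mul_cancel₀ _ (ne_of_gt hcpos)] at h3
  linarith

private lemma hasDerivAt_comp_ofReal {E : Type*} [NormedAddCommGroup E] [NormedSpace ℂ E]
    {e : ℂ → E} {e' : E} {z : ℝ} (hf : HasDerivAt e e' (z : ℂ)) :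
    HasDerivAt (fun y : ℝ => e y) e' z := by
  simpa [Function.comp_def] using ((hf.hasFDerivAt.restrictScalars ℝ).comp z Complex.ofRealCLM.hasFDerivAt).hasDerivAt

private lemma mem_of_conj_exp_mem {C₁ : Type*} [CStarAlgebra C₁]
    (D₁ : StarSubalgebra ℂ C₁)
    (hD₁comm : ∀ a ∈ D₁, ∀ b ∈ D₁, a * b = b * a)
    (hmasa₁ : ∀ x : C₁, (∀ d ∈ D₁, x * d = d * x) → x ∈ D₁)
    (b : C₁)
    (hw : ∀ r : ℝ, ∀ d ∈ D₁,
      exp ((r : ℂ) • (-(Complex.I • b))) * d * exp ((r : ℂ) • (Complex.I • b)) ∈ D₁) :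
    b ∈ D₁ := by
  apply hmasa₁
  have hsa : ∀ a ∈ D₁, IsSelfAdjoint a → b * a = a * b := by
    intro a haD ha
    apply commute_of_commutator_commutes ha
    set xb : C₁ := Complex.I • b with hxb
    -- derivative of the conjugation map at 0, as a real-parameter map
    have hF : HasDerivAt (fun t : ℂ => exp (t • (-xb)) * a * exp (t • xb))
        ((-xb) * a + a * xb) (((0 : ℝ) : ℂ)) := by
      have h1 : HasDerivAt (fun t : ℂ => exp (t • (-xb))) (exp ((0:ℂ) • (-xb)) * (-xb)) 0 :=
        hasDerivAt_exp_smul_const (-xb) 0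
      have h2 : HasDerivAt (fun t : ℂ => exp (t • xb)) (exp ((0:ℂ) • xb) * xb) 0 :=
        hasDerivAt_exp_smul_const xb 0
      have h3 := (h1.mul_const a).mul h2
      rw [Complex.ofReal_zero]
      convert h3 using 1
      · funext t; simp
      simp [exp_zero]
    have hFr : HasDerivAt (fun r : ℝ => exp ((r : ℂ) • (-xb)) * a * exp ((r : ℂ) • xb))
        ((-xb) * a + a * xb) 0 := hasDerivAt_comp_ofReal hF
    have hG : HasDerivAt (fun r : ℝ =>
        (exp ((r : ℂ) • (-xb)) * a * exp ((r : ℂ) • xb)) * a -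
          a * (exp ((r : ℂ) • (-xb)) * a * exp ((r : ℂ) • xb)))
        (((-xb) * a + a * xb) * a - a * ((-xb) * a + a * xb)) 0 :=
      (hFr.mul_const a).sub (hFr.const_mul a)
    have hzero : (fun r : ℝ =>
        (exp ((r : ℂ) • (-xb)) * a * exp ((r : ℂ) • xb)) * a -
          a * (exp ((r : ℂ) • (-xb)) * a * exp ((r : ℂ) • xb))) = fun _ => (0 : C₁) := by
      funext r
      exact sub_eq_zero.mpr (hD₁comm _ (hw r a haD) a haD)
    have hG0 : HasDerivAt (fun r : ℝ =>
        (exp ((r : ℂ) • (-xb)) * a * exp ((r : ℂ) • xb)) * a -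
          a * (exp ((r : ℂ) • (-xb)) * a * exp ((r : ℂ) • xb))) 0 0 := by
      rw [hzero]; exact hasDerivAt_const _ _
    have hmz : ((-xb) * a + a * xb) * a - a * ((-xb) * a + a * xb) = 0 := hG.unique hG0
    -- translate into a commutation statement
    have hm : (-xb) * a + a * xb = Complex.I • (a * b - b * a) := by
      rw [hxb, neg_mul, mul_smul_comm, smul_mul_assoc, smul_sub]
      abel
    rw [hm] at hmz
    have hmz' : Complex.I • ((a * b - b * a) * a) = Complex.I • (a * (a * b - b * a)) := by
      rw [← smul_mul_assoc, ← mul_smul_comm]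
      exact sub_eq_zero.mp hmz
    have hcab : (a * b - b * a) * a = a * (a * b - b * a) :=
      smul_right_injective C₁ Complex.I_ne_zero hmz'
    have hfin : Commute a (-(a * b - b * a)) := Commute.neg_right hcab.symm
    rwa [neg_sub] at hfin
  -- now a general element of `D₁`
  intro d hd
  have h1 : IsSelfAdjoint ((2⁻¹ : ℂ) • (d + star d)) := by
    rw [IsSelfAdjoint, star_smul, star_add, star_star]
    simp [add_comm]
  have h2 : IsSelfAdjoint (((2 : ℂ)⁻¹ * Complex.I) • (star d - d)) := by
    rw [IsSelfAdjoint, star_smul, star_sub, star_star]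
    simp only [star_mul', Complex.star_def, Complex.conj_I, map_inv₀, Complex.conj_ofNat]
    rw [mul_neg, neg_smul, ← smul_neg, neg_sub]
  have m1 : (2⁻¹ : ℂ) • (d + star d) ∈ D₁ :=
    D₁.smul_mem (add_mem hd (star_mem hd)) _
  have m2 : ((2 : ℂ)⁻¹ * Complex.I) • (star d - d) ∈ D₁ :=
    D₁.smul_mem (sub_mem (star_mem hd) hd) _
  have hdec : d = (2⁻¹ : ℂ) • (d + star d) +
      Complex.I • (((2 : ℂ)⁻¹ * Complex.I) • (star d - d)) := by
    match_scalars <;> · field_simp [Complex.I_mul_I] <;> simp [Complex.I_sq] <;> norm_num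
  have hb1 := hsa _ m1 h1
  have hb2 := hsa _ m2 h2
  calc b * d = b * ((2⁻¹ : ℂ) • (d + star d)) +
        Complex.I • (b * (((2 : ℂ)⁻¹ * Complex.I) • (star d - d))) := by
        rw [← mul_smul_comm, ← mul_add, ← hdec]
    _ = ((2⁻¹ : ℂ) • (d + star d)) * b +
        Complex.I • ((((2 : ℂ)⁻¹ * Complex.I) • (star d - d)) * b) := by rw [hb1, hb2]
    _ = d * b := by rw [← smul_mul_assoc, ← add_mul, ← hdec]

/-- Let `(C,D)` be a regular inclusion, `(C₁,D₁)` a regular MASA inclusion, and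
`α : C → C₁` a unital injective `*`-homomorphism which is regular
(`α(N(C,D)) ⊆ N(C₁,D₁)`).  Then the relative commutant of `D` in `C` is commutative. -/
theorem regular_embedding_into_masa_gives_abelian_commutant
    {C : Type*} [CStarAlgebra C] {C₁ : Type*} [CStarAlgebra C₁]
    (D : StarSubalgebra ℂ C) (hDclosed : IsClosed (D : Set C))
    (hDcomm : ∀ a ∈ D, ∀ b ∈ D, a * b = b * a)
    -- `(C,D)` is regular
    (hreg : Dense
      ((Submodule.span ℂ {v : C | IsNormalizer (D : Set C) v} : Submodule ℂ C) : Set C))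
    (D₁ : StarSubalgebra ℂ C₁) (hD₁closed : IsClosed (D₁ : Set C₁))
    (hD₁comm : ∀ a ∈ D₁, ∀ b ∈ D₁, a * b = b * a)
    -- `D₁` is a MASA in `C₁`
    (hmasa₁ : ∀ x : C₁, (∀ d ∈ D₁, x * d = d * x) → x ∈ D₁)
    -- `(C₁,D₁)` is regular
    (hreg₁ : Dense
      ((Submodule.span ℂ {v : C₁ | IsNormalizer (D₁ : Set C₁) v} : Submodule ℂ C₁) : Set C₁))
    -- `α` is a unital injective `*`-homomorphism mapping normalizers to normalizers
    (α : C →⋆ₐ[ℂ] C₁) (hαinj : Function.Injective α)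
    (hαreg : ∀ v : C, IsNormalizer (D : Set C) v → IsNormalizer (D₁ : Set C₁) (α v)) :
    ∀ x ∈ {x : C | ∀ d ∈ D, x * d = d * x},
      ∀ y ∈ {x : C | ∀ d ∈ D, x * d = d * x}, x * y = y * x := by
  have hαcont : Continuous α :=
    AddMonoidHomClass.continuous_of_bound α 1
      (fun z => by simpa using NonUnitalStarAlgHom.norm_apply_le α z)
  -- self-adjoint elements of the relative commutant map into `D₁`
  have key : ∀ w : C, (∀ d ∈ D, w * d = d * w) → IsSelfAdjoint w → α w ∈ D₁ := by
    intro w hwD hwsa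
    apply mem_of_conj_exp_mem D₁ hD₁comm hmasa₁ (α w)
    intro r d hd
    set z : C := (r : ℂ) • (Complex.I • w) with hz
    have hstarz : star z = -z := by
      simp [hz, star_smul, hwsa.star_eq, Complex.conj_I, Complex.conj_ofReal]
    -- `u = exp z` is a normalizer of `D`
    have hnorm : IsNormalizer (D : Set C) (exp z) := by
      intro d' hd'
      have hcw : Commute d' w := (hwD d' hd').symm
      have hcz : Commute d' z := (hcw.smul_right Complex.I).smul_right (r : ℂ)
      have h1 : Commute d' (exp z) := hcz.exp_right
      have h2 : Commute d' (star (exp z)) := by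
        rw [star_exp, hstarz]; exact hcz.neg_right.exp_right
      have huu : star (exp z) * exp z = 1 := by
        rw [star_exp, hstarz, ← exp_add_of_commute (Commute.refl z).neg_left,
          neg_add_cancel, exp_zero]
      have huu' : exp z * star (exp z) = 1 := by
        rw [star_exp, hstarz, ← exp_add_of_commute (Commute.refl z).neg_right,
          add_neg_cancel, exp_zero]
      constructor
      · rw [h2.symm.eq, mul_assoc, huu, mul_one]; exact hd'
      · rw [h1.symm.eq, mul_assoc, huu', mul_one]; exact hd'
    have hmem := hαreg _ hnorm d hd
    have hαz : α z = (r : ℂ) • (Complex.I • α w) := by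
      rw [hz, map_smul, map_smul]
    have hαu : α (exp z) = exp ((r : ℂ) • (Complex.I • α w)) := by
      rw [map_exp α hαcont, hαz]
    have hαustar : star (α (exp z)) = exp ((r : ℂ) • (-(Complex.I • α w))) := by
      have hsaw : IsSelfAdjoint (α w) := by
        rw [IsSelfAdjoint, ← map_star, hwsa.star_eq]
      rw [map_exp α hαcont, star_exp, hαz]
      simp [star_smul, hsaw.star_eq, Complex.conj_I, Complex.conj_ofReal]
    rw [← hαustar, ← hαu]
    exact hmem.1
  -- all elements of the relative commutant map into `D₁`
  have key' : ∀ w : C, (∀ d ∈ D, w * d = d * w) → α w ∈ D₁ := by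
    intro w hwD
    have hstarw : ∀ d ∈ D, star w * d = d * star w := by
      intro d hd
      have := congrArg star (hwD (star d) (star_mem hd))
      simpa [star_mul] using this.symm
    have hc1 : ∀ d ∈ D, ((2⁻¹ : ℂ) • (w + star w)) * d = d * ((2⁻¹ : ℂ) • (w + star w)) := by
      intro d hd
      rw [smul_mul_assoc, mul_smul_comm, add_mul, mul_add, hwD d hd, hstarw d hd]
    have hc2 : ∀ d ∈ D, (((2 : ℂ)⁻¹ * Complex.I) • (star w - w)) * d =
        d * (((2 : ℂ)⁻¹ * Complex.I) • (star w - w)) := by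
      intro d hd
      rw [smul_mul_assoc, mul_smul_comm, sub_mul, mul_sub, hwD d hd, hstarw d hd]
    have hs1 : IsSelfAdjoint ((2⁻¹ : ℂ) • (w + star w)) := by
      rw [IsSelfAdjoint, star_smul, star_add, star_star]
      simp [add_comm]
    have hs2 : IsSelfAdjoint (((2 : ℂ)⁻¹ * Complex.I) • (star w - w)) := by
      rw [IsSelfAdjoint, star_smul, star_sub, star_star]
      simp only [star_mul', Complex.star_def, Complex.conj_I, map_inv₀, Complex.conj_ofNat]
      rw [mul_neg, neg_smul, ← smul_neg, neg_sub]
    have hdec : w = (2⁻¹ : ℂ) • (w + star w) +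
        Complex.I • (((2 : ℂ)⁻¹ * Complex.I) • (star w - w)) := by
      match_scalars <;> · field_simp [Complex.I_mul_I] <;> simp [Complex.I_sq] <;> norm_num
    have := D₁.add_mem (key _ hc1 hs1) (D₁.smul_mem (key _ hc2 hs2) Complex.I)
    rwa [show α ((2⁻¹ : ℂ) • (w + star w)) + Complex.I • α (((2 : ℂ)⁻¹ * Complex.I) • (star w - w))
      = α w by rw [← map_smul, ← map_add, ← hdec]] at this
  intro x hx y hy
  apply hαinj
  rw [map_mul, map_mul]
  exact hD₁comm _ (key' x hx) _ (key' y hy)
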